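/- Let f = (f_0, f_1, …) be an eventually-zero sequence of nonnegative integers and for each k ≥ 0 define ψ_k(f) = ∂^k(f_k) + ∂^{k+1}(f_{k+1}) − f_{k+1}. Let g be the sequence with g_0 = f_0 and g_k = f_k − δ_k(f_k) for k ≥ 1. Then for every k ≥ 0, ψ_k(g) = ψ_k(f) + δ_{k+1}(f_{k+1}). -/

import Mathlib

/-- Fold a function `g` over the terms `(a_t, t)` of the unique Macaulay-type
representation `n = C(a_{k+1}, k+1) + ⋯ + C(a_i, i)` with
`a_{k+1} > ⋯ > a_i ≥ i ≥ 1`, computed greedily: at each level `t` (from `k+1`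
down), `a_t` is the largest `a` with `C(a, t) ≤` the current remainder. -/
def macRepFold (g : ℕ → ℕ → ℕ) : ℕ → ℕ → ℕ
  | 0, _ => 0
  | t + 1, n =>
    if n = 0 then 0
    else
      let a := Nat.findGreatest (fun a => Nat.choose a (t + 1) ≤ n) (n + t + 1)
      g a (t + 1) + macRepFold g t (n - Nat.choose a (t + 1))

lemma choose_ge_sub (a t : ℕ) : a - t ≤ Nat.choose a (t+1) := by
  rcases le_or_gt a t with h | h
  · simp [Nat.sub_eq_zero_of_le h]
  · have ht : t + 1 ≤ a := h
    have h1 : Nat.choose a (a - (t+1)) = Nat.choose a (t+1) := Nat.choose_symm ht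
    have h2 : Nat.choose (a - (t+1) + 1) (a - (t+1)) ≤ Nat.choose a (a - (t+1)) :=
      Nat.choose_le_choose _ (by omega)
    rw [Nat.choose_succ_self_right] at h2
    omega

lemma greedy_spec (t n : ℕ) (hn : n ≠ 0) :
    t + 1 ≤ Nat.findGreatest (fun a => Nat.choose a (t+1) ≤ n) (n+t+1) ∧
    Nat.choose (Nat.findGreatest (fun a => Nat.choose a (t+1) ≤ n) (n+t+1)) (t+1) ≤ n ∧
    n < Nat.choose (Nat.findGreatest (fun a => Nat.choose a (t+1) ≤ n) (n+t+1) + 1) (t+1) := by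
  set a := Nat.findGreatest (fun a => Nat.choose a (t+1) ≤ n) (n+t+1) with ha
  have hw : Nat.choose (t+1) (t+1) ≤ n := by simp [Nat.choose_self]; omega
  have h1 : t + 1 ≤ a := Nat.le_findGreatest (by omega) hw
  have h2 : Nat.choose a (t+1) ≤ n := by
    rw [ha]
    exact Nat.findGreatest_spec (P := fun a => Nat.choose a (t+1) ≤ n) (m := t+1) (by omega) hw
  have hb : a ≤ n + t := by have := choose_ge_sub a t; omega
  have h3 : n < Nat.choose (a+1) (t+1) := by
    by_contra hle
    push_neg at hle
    have : a + 1 ≤ a := Nat.le_findGreatest (by omega) hle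
    omega
  exact ⟨h1, h2, h3⟩

lemma greedy_small (t n : ℕ) (hn : n ≠ 0) (h : n ≤ t + 1) :
    Nat.findGreatest (fun a => Nat.choose a (t+1) ≤ n) (n+t+1) = t+1 := by
  obtain ⟨h1, h2, h3⟩ := greedy_spec t n hn
  set a := Nat.findGreatest (fun a => Nat.choose a (t+1) ≤ n) (n+t+1)
  by_contra hne
  have h4 : t + 2 ≤ a := by omega
  have h5 : Nat.choose (t+2) (t+1) ≤ Nat.choose a (t+1) := Nat.choose_le_choose _ h4
  have h6 : Nat.choose (t+2) (t+1) = t + 2 := Nat.choose_succ_self_right (t+1)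
  omega

lemma delta_le : ∀ t n, macRepFold (fun a t => if a = t then 1 else 0) t n ≤ n := by
  intro t
  induction t with
  | zero => intro n; simp [macRepFold]
  | succ t ih =>
    intro n
    rw [macRepFold]
    split_ifs with h
    · omega
    · obtain ⟨h1, h2, h3⟩ := greedy_spec t n h
      set a := Nat.findGreatest (fun a => Nat.choose a (t+1) ≤ n) (n+t+1)
      have hc : 1 ≤ Nat.choose a (t+1) := Nat.choose_pos (by omega)
      have := ih (n - Nat.choose a (t+1))
      simp only
      split_ifs <;> omega

lemma delta_small : ∀ t n, n ≤ t → macRepFold (fun a t => if a = t then 1 else 0) t n = n := by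
  intro t
  induction t with
  | zero => intro n h; interval_cases n; simp [macRepFold]
  | succ t ih =>
    intro n h
    rw [macRepFold]
    split_ifs with h0
    · omega
    · rw [greedy_small t n h0 h]
      simp [Nat.choose_self]
      rw [ih (n-1) (by omega)]
      omega

lemma upper_small : ∀ t n, n ≤ t → macRepFold (fun a t => Nat.choose (a-1) t) t n = 0 := by
  intro t
  induction t with
  | zero => intro n h; interval_cases n; simp [macRepFold]
  | succ t ih =>
    intro n h
    rw [macRepFold]
    split_ifs with h0
    · rfl
    · rw [greedy_small t n h0 h]
      simp [Nat.choose_self]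
      exact ih (n-1) (by omega)

lemma upper_sub_delta : ∀ t n,
    macRepFold (fun a t => Nat.choose (a-1) t) t
        (n - macRepFold (fun a t => if a = t then 1 else 0) t n) =
      macRepFold (fun a t => Nat.choose (a-1) t) t n := by
  intro t
  induction t with
  | zero => intro n; simp [macRepFold]
  | succ t ih =>
    intro n
    by_cases h : n = 0
    · simp [h, macRepFold]
    obtain ⟨h1, h2, h3⟩ := greedy_spec t n h
    set a := Nat.findGreatest (fun a => Nat.choose a (t+1) ≤ n) (n+t+1) with ha
    by_cases hat : a = t + 1
    · have hch : Nat.choose (t+1+1) (t+1) = t + 2 := Nat.choose_succ_self_right (t+1)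
      have hn' : n ≤ t + 1 := by
        rw [hat] at h3
        have : Nat.choose (t+1+1) (t+1) = t + 2 := Nat.choose_succ_self_right (t+1)
        omega
      rw [delta_small (t+1) n hn', Nat.sub_self]
      rw [upper_small (t+1) n hn']
      simp [macRepFold]
    · -- a ≥ t+2
      have hat2 : t + 2 ≤ a := by omega
      set c := Nat.choose a (t+1) with hc
      have hc1 : 1 ≤ c := Nat.choose_pos (by omega)
      set r := n - c with hr
      have hDr : macRepFold (fun a t => if a = t then 1 else 0) t r ≤ r := delta_le t r
      set D := macRepFold (fun a t => if a = t then 1 else 0) t r with hD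
      have hDeq : macRepFold (fun a t => if a = t then 1 else 0) (t+1) n = D := by
        rw [macRepFold]
        simp only [h, if_neg, ← ha, hat, if_false]
        simp [hat]
        rfl
      set m := n - D with hm
      have hcm : c ≤ m := by omega
      have hm0 : m ≠ 0 := by omega
      have hfg : Nat.findGreatest (fun b => Nat.choose b (t+1) ≤ m) (m+t+1) = a := by
        have hle : a ≤ Nat.findGreatest (fun b => Nat.choose b (t+1) ≤ m) (m+t+1) := by
          have : a - t ≤ c := choose_ge_sub a t
          exact Nat.le_findGreatest (by omega) hcm
        have hge : Nat.findGreatest (fun b => Nat.choose b (t+1) ≤ m) (m+t+1) ≤ a := by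
          by_contra hgt
          push_neg at hgt
          have hP : Nat.choose (Nat.findGreatest (fun b => Nat.choose b (t+1) ≤ m) (m+t+1)) (t+1) ≤ m := by
            have hw : a ≤ m + t + 1 := by have : a - t ≤ c := choose_ge_sub a t; omega
            exact Nat.findGreatest_spec (P := fun b => Nat.choose b (t+1) ≤ m) (m := a) hw hcm
          have h5 : Nat.choose (a+1) (t+1) ≤ Nat.choose (Nat.findGreatest (fun b => Nat.choose b (t+1) ≤ m) (m+t+1)) (t+1) :=
            Nat.choose_le_choose _ hgt
          omega
        omega
      rw [hDeq]
      rw [← hm]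
      conv_lhs => rw [macRepFold]
      rw [if_neg hm0]
      simp only [hfg]
      have hmc : m - c = r - D := by omega
      conv_rhs => rw [macRepFold]
      rw [if_neg h]
      simp only [← ha, ← hc]
      rw [hmc]
      rw [ih r]


/-- The combinatorial shadow function `∂_k(n) = Σ_t C(a_t, t - 1)`. -/
def partialLower (k n : ℕ) : ℕ := macRepFold (fun a t => Nat.choose a (t - 1)) (k + 1) n

/-- The combinatorial shadow function `∂^k(n) = Σ_t C(a_t - 1, t)`. -/
def partialUpper (k n : ℕ) : ℕ := macRepFold (fun a t => Nat.choose (a - 1) t) (k + 1) n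

/-- The error function `δ_k(n) = #{t : a_t = t}`. -/
def deltaErr (k n : ℕ) : ℕ := macRepFold (fun a t => if a = t then 1 else 0) (k + 1) n

/-- The function `d^k(n) = Σ_t C(a_t + 1, t)`. -/
def dUpper (k n : ℕ) : ℕ := macRepFold (fun a t => Nat.choose (a + 1) t) (k + 1) n

/-- Key computation in Theorem 1.4 (f*): with
`ψ_k(h) = ∂^k(h_k) + ∂^{k+1}(h_{k+1}) − h_{k+1}` and `g = f − δ(f)`
(i.e. `g_0 = f_0` and `g_k = f_k − δ_k(f_k)` for `k ≥ 1`), one has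
`ψ_k(g) = ψ_k(f) + δ_{k+1}(f_{k+1})` for every `k ≥ 0`. -/
theorem psi_sub_delta (f : ℕ → ℕ) (hf : ∃ N, ∀ j, N ≤ j → f j = 0)
    (g : ℕ → ℕ) (hg0 : g 0 = f 0) (hg : ∀ k, 1 ≤ k → g k = f k - deltaErr k (f k)) :
    ∀ k : ℕ,
      (partialUpper k (g k) : ℤ) + (partialUpper (k + 1) (g (k + 1)) : ℤ) - (g (k + 1) : ℤ) =
        ((partialUpper k (f k) : ℤ) + (partialUpper (k + 1) (f (k + 1)) : ℤ)
            - (f (k + 1) : ℤ)) + (deltaErr (k + 1) (f (k + 1)) : ℤ) := by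
  have key : ∀ k n : ℕ, partialUpper k (n - deltaErr k n) = partialUpper k n :=
    fun k n => upper_sub_delta (k+1) n
  have dle : ∀ k n : ℕ, deltaErr k n ≤ n := fun k n => delta_le (k+1) n
  intro k
  have hA : partialUpper k (g k) = partialUpper k (f k) := by
    rcases Nat.eq_zero_or_pos k with rfl | hk
    · rw [hg0]
    · rw [hg k hk, key]
  have hB : g (k+1) = f (k+1) - deltaErr (k+1) (f (k+1)) := hg (k+1) (by omega)
  have hC : partialUpper (k+1) (g (k+1)) = partialUpper (k+1) (f (k+1)) := by
    rw [hB, key]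
  have hd := dle (k+1) (f (k+1))
  rw [hA, hC, hB]
  push_cast [Nat.cast_sub hd]
  ring
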